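/- Conditional on the out-set L⁺_{n}(x) of literal x in F_{n,p} equalling a fixed strictly distinct set X (not containing variable x_{n+1}), the probability that x⇝x̄ after adding variable x_{n+1} (i.e., in F_{n+1,p}) satisfies Pr(x⇝x̄ in F_{n+1,p} | L⁺_n(x)=X) = [1−(1−p)^{|X|}]² + 2[1−(1−p)^{|X|}](1−p)^{|X|}·Pr(x⇝x̄ in F_{n+1−|X|,p}) ≤ p²|X|² + 2p|X|·Pr(x⇝x̄ in F_{n+1−|X|,p}). -/

import Mathlib

/-- The probability of an event `A` when each coordinate `e : E` is an
independent Bernoulli(`p`) bit. -/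
noncomputable def bernoulliPr {E : Type*} [Fintype E] [DecidableEq E]
    (p : ℝ) (A : Set (E → Bool)) : ℝ :=
  ∑ ω : E → Bool,
    Set.indicator A (fun ω' => ∏ e : E, if ω' e = true then p else 1 - p) ω

/-- A literal over `n` Boolean variables. -/
abbrev Lit (n : ℕ) := Fin n × Bool

/-- Negation of a literal. -/
def negLit {n : ℕ} (x : Lit n) : Lit n := (x.1, !x.2)

/-- Edge relation of the implication digraph of the random 2-SAT formula
encoded by `ω` : there is an edge `x → y` iff the clause `x̄ ∨ y` (an unordered
pair of strictly distinct literals) is present. -/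
def fEdge {n : ℕ} (ω : Sym2 (Lit n) → Bool) (x y : Lit n) : Prop :=
  x.1 ≠ y.1 ∧ ω s(negLit x, y) = true

/-- Directed reachability in the implication digraph (`x ⇝ x` by convention). -/
def freach {n : ℕ} (ω : Sym2 (Lit n) → Bool) : Lit n → Lit n → Prop :=
  Relation.ReflTransGen (fEdge ω)

/-- The out-set `L⁺(x)` of a literal `x`. -/
def outSet {n : ℕ} (ω : Sym2 (Lit n) → Bool) (x : Lit n) : Set (Lit n) :=
  {y | freach ω x y}

/-- A set of literals is strictly distinct if it contains no literal together
with its negation. -/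
def SDset {n : ℕ} (M : Set (Lit n)) : Prop := ∀ y ∈ M, negLit y ∉ M

/-- `P_{n,p}(k)` : the probability that in the random 2-SAT formula `F_{n,p}`
the out-set of the literal `x` consists of exactly `k` strictly distinct
literals. -/
noncomputable def Pnp (n : ℕ) (p : ℝ) (k : ℕ) (x : Lit n) : ℝ :=
  bernoulliPr p
    {ω : Sym2 (Lit n) → Bool | SDset (outSet ω x) ∧ (outSet ω x).ncard = k}

/-- The random graph `G_{n,q}` encoded by a configuration of edge-bits. -/
def graphOf {n : ℕ} (η : Sym2 (Fin n) → Bool) : SimpleGraph (Fin n) :=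
  SimpleGraph.fromRel fun a b => η s(a, b) = true

/-- The probability that `G_{k,p}` is connected. -/
noncomputable def connPr (k : ℕ) (p : ℝ) : ℝ :=
  bernoulliPr p {η : Sym2 (Fin k) → Bool | (graphOf η).Connected}

/-- `Q_{n,p}(k)` : the probability that the connected component of the vertex
`v` in `G_{n,2p-p²}` has exactly `k` vertices. -/
noncomputable def Qnp (n : ℕ) (p : ℝ) (k : ℕ) (v : Fin n) : ℝ :=
  bernoulliPr (2 * p - p ^ 2)
    {η : Sym2 (Fin n) → Bool | {y | (graphOf η).Reachable v y}.ncard = k}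

/-- The probability that `x ⇝ x̄` in `F_{m,p}` for a (fixed, canonical) literal;
this probability does not depend on the choice of the literal.  For `m = 0`
there are no literals and the value is `0`. -/
noncomputable def spineProb (m : ℕ) (p : ℝ) : ℝ :=
  if h : 0 < m then
    bernoulliPr p
      {ω : Sym2 (Lit m) → Bool |
        freach ω ((⟨0, h⟩, true) : Lit m) (negLit ((⟨0, h⟩, true) : Lit m))}
  else 0

/-- Edges of the implication digraph of the subformula using only the first `t`
variables. -/
def edgeBelow {m : ℕ} (t : ℕ) (ω : Sym2 (Lit m) → Bool) (u v : Lit m) : Prop :=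
  (u.1 : ℕ) < t ∧ (v.1 : ℕ) < t ∧ u.1 ≠ v.1 ∧ ω s(negLit u, v) = true

/-- Reachability using only the first `t` variables. -/
def reachBelow {m : ℕ} (t : ℕ) (ω : Sym2 (Lit m) → Bool) :
    Lit m → Lit m → Prop :=
  Relation.ReflTransGen (edgeBelow t ω)

/-- The embedding of literals on `n` variables into literals on `n + 1`
variables. -/
def embedLit {n : ℕ} (z : Lit n) : Lit (n + 1) := (Fin.castSucc z.1, z.2)


set_option linter.unusedSectionVars false
set_option linter.unreachableTactic false
set_option linter.unusedTactic false
set_option linter.unusedVariables false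
set_option maxHeartbeats 1600000

namespace BPr
variable {E F : Type*} [Fintype E] [DecidableEq E] [Fintype F] [DecidableEq F] {p : ℝ}

def w (p : ℝ) (b : Bool) : ℝ := if b = true then p else 1 - p

lemma bernoulliPr_eq (A : Set (E → Bool)) :
    bernoulliPr p A = ∑ ω : E → Bool, Set.indicator A (fun ω' => ∏ e : E, w p (ω' e)) ω := rfl

lemma mass : ∑ ω : E → Bool, ∏ e : E, w p (ω e) = 1 := by
  rw [← Fintype.prod_sum (fun (_ : E) (b : Bool) => w p b)]
  simp [w]

lemma bernoulliPr_univ : bernoulliPr p (Set.univ : Set (E → Bool)) = 1 := by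
  rw [bernoulliPr_eq]
  simp only [Set.indicator_univ]
  exact mass

lemma bernoulliPr_add_compl (A : Set (E → Bool)) :
    bernoulliPr p A + bernoulliPr p Aᶜ = 1 := by
  rw [bernoulliPr_eq, bernoulliPr_eq, ← Finset.sum_add_distrib]
  rw [← mass (p := p) (E := E)]
  refine Finset.sum_congr rfl fun ω _ => ?_
  classical
  by_cases h : ω ∈ A
  · rw [Set.indicator_of_mem h, Set.indicator_of_notMem (by simpa using h), add_zero]
  · rw [Set.indicator_of_notMem h, Set.indicator_of_mem (by simpa using h), zero_add]

lemma bernoulliPr_compl (A : Set (E → Bool)) :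
    bernoulliPr p Aᶜ = 1 - bernoulliPr p A := by
  have := bernoulliPr_add_compl (p := p) A; linarith

lemma bernoulliPr_union_disjoint {A B : Set (E → Bool)} (h : Disjoint A B) :
    bernoulliPr p (A ∪ B) = bernoulliPr p A + bernoulliPr p B := by
  rw [bernoulliPr_eq, bernoulliPr_eq, bernoulliPr_eq, ← Finset.sum_add_distrib]
  refine Finset.sum_congr rfl fun ω _ => ?_
  rw [Set.indicator_union_of_disjoint h]

lemma bernoulliPr_nonneg (hp0 : 0 ≤ p) (hp1 : p ≤ 1) (A : Set (E → Bool)) :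
    0 ≤ bernoulliPr p A := by
  rw [bernoulliPr_eq]
  refine Finset.sum_nonneg fun ω _ => Set.indicator_nonneg (fun ω' _ => ?_) ω
  exact Finset.prod_nonneg fun e _ => by unfold w; split <;> linarith

lemma bernoulliPr_singleton (σ : E → Bool) :
    bernoulliPr p {σ} = ∏ e : E, w p (σ e) := by
  classical
  rw [bernoulliPr_eq]
  rw [Finset.sum_eq_single σ]
  · simp
  · intro ω _ hne
    rw [Set.indicator_of_notMem (by simpa using hne)]
  · simp

def DependsOn (A : Set (E → Bool)) (S : Set E) : Prop :=
  ∀ ω ω' : E → Bool, (∀ e ∈ S, ω e = ω' e) → (ω ∈ A ↔ ω' ∈ A)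

lemma DependsOn.mono {A : Set (E → Bool)} {S T : Set E} (h : DependsOn A S) (hST : S ⊆ T) :
    DependsOn A T := fun ω ω' hagree => h ω ω' fun e he => hagree e (hST he)

lemma DependsOn.compl {A : Set (E → Bool)} {S : Set E} (h : DependsOn A S) :
    DependsOn Aᶜ S := fun ω ω' hagree => by
  have := h ω ω' hagree; simp only [Set.mem_compl_iff]; tauto

lemma DependsOn.inter {A B : Set (E → Bool)} {S : Set E} (hA : DependsOn A S)
    (hB : DependsOn B S) : DependsOn (A ∩ B) S := fun ω ω' hagree => by
  have := hA ω ω' hagree; have := hB ω ω' hagree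
  simp only [Set.mem_inter_iff]; tauto

def proj (S : Set E) [DecidablePred (· ∈ S)] (A : Set (E → Bool)) : Set ({e // e ∈ S} → Bool) :=
  {σ | (fun e => if h : e ∈ S then σ ⟨e, h⟩ else false) ∈ A}

lemma core (S : Set E) [DecidablePred (· ∈ S)] (A B : Set (E → Bool))
    (hA : DependsOn A S) (hB : DependsOn B Sᶜ) :
    bernoulliPr p (A ∩ B) =
      bernoulliPr p (proj S A) * bernoulliPr p (proj Sᶜ B) := by
  classical
  rw [bernoulliPr_eq, bernoulliPr_eq, bernoulliPr_eq]
  set q : E → Prop := (· ∈ S) with hq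
  have hqc : ∀ e, (e ∈ Sᶜ) = ¬ q e := fun e => rfl
  let eqv : (E → Bool) ≃ ({e // q e} → Bool) × ({e // ¬ q e} → Bool) :=
    Equiv.piEquivPiSubtypeProd q (fun _ => Bool)
  rw [← Equiv.sum_comp eqv.symm
    (fun ω => Set.indicator (A ∩ B) (fun ω' => ∏ e : E, w p (ω' e)) ω)]
  rw [Fintype.sum_prod_type]
  have key : ∀ στ : ({e // q e} → Bool) × ({e // ¬ q e} → Bool),
      Set.indicator (A ∩ B) (fun ω' => ∏ e : E, w p (ω' e)) (eqv.symm στ) =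
      (Set.indicator (proj S A) (fun σ => ∏ e : {e // e ∈ S}, w p (σ e)) στ.1) *
      (Set.indicator (proj Sᶜ B) (fun τ => ∏ e : {e // e ∈ Sᶜ}, w p (τ e)) στ.2) := by
    rintro ⟨σ, τ⟩
    have happ : ∀ e, eqv.symm (σ, τ) e = if h : q e then σ ⟨e, h⟩ else τ ⟨e, h⟩ := by
      intro e
      simp [eqv, Equiv.piEquivPiSubtypeProd]
    have hmemA : eqv.symm (σ, τ) ∈ A ↔ σ ∈ proj S A := by
      refine hA _ _ fun e he => ?_
      rw [happ e, dif_pos he]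
      simp [proj, dif_pos he]
    have hmemB : eqv.symm (σ, τ) ∈ B ↔ τ ∈ proj Sᶜ B := by
      refine hB _ _ fun e he => ?_
      rw [happ e, dif_neg he]
      simp [proj, dif_neg, he]
    have hprod : (∏ e : E, w p (eqv.symm (σ, τ) e)) =
        (∏ e : {e // e ∈ S}, w p (σ e)) * (∏ e : {e // e ∈ Sᶜ}, w p (τ e)) := by
      rw [← Fintype.prod_subtype_mul_prod_subtype q (fun e => w p (eqv.symm (σ, τ) e))]
      congr 1
      · exact Fintype.prod_congr _ _ fun ⟨e, he⟩ => by rw [happ e, dif_pos he]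
      · exact Fintype.prod_congr _ _ fun ⟨e, he⟩ => by rw [happ e, dif_neg he]
    by_cases hA' : eqv.symm (σ, τ) ∈ A ∩ B
    · rw [Set.indicator_of_mem hA', Set.indicator_of_mem (hmemA.mp hA'.1),
        Set.indicator_of_mem (hmemB.mp hA'.2), hprod]
    · rw [Set.indicator_of_notMem hA']
      rcases (by rw [Set.mem_inter_iff] at hA'; tauto :
        eqv.symm (σ, τ) ∉ A ∨ eqv.symm (σ, τ) ∉ B) with h | h
      · rw [Set.indicator_of_notMem (fun hc => h (hmemA.mpr hc)), zero_mul]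
      · rw [Set.indicator_of_notMem (fun hc => h (hmemB.mpr hc)), mul_zero]
  calc ∑ σ : {e // q e} → Bool, ∑ τ : {e // ¬ q e} → Bool,
        Set.indicator (A ∩ B) (fun ω' => ∏ e : E, w p (ω' e)) (eqv.symm (σ, τ))
      = ∑ σ : {e // q e} → Bool, ∑ τ : {e // ¬ q e} → Bool,
        (Set.indicator (proj S A) (fun σ => ∏ e : {e // e ∈ S}, w p (σ e)) σ) *
        (Set.indicator (proj Sᶜ B) (fun τ => ∏ e : {e // e ∈ Sᶜ}, w p (τ e)) τ) := by
        refine Finset.sum_congr rfl fun σ _ => Finset.sum_congr rfl fun τ _ => key (σ, τ)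
    _ = _ := by rw [← Finset.sum_mul_sum]; congr!

lemma dependsOn_univ (S : Set E) : DependsOn (Set.univ : Set (E → Bool)) S :=
  fun _ _ _ => by simp

lemma proj_univ (S : Set E) [DecidablePred (· ∈ S)] :
    proj S (Set.univ : Set (E → Bool)) = Set.univ := by
  ext σ; simp [proj]

lemma split (S : Set E) [DecidablePred (· ∈ S)] (A : Set (E → Bool)) (hA : DependsOn A S) :
    bernoulliPr p A = bernoulliPr p (proj S A) := by
  have := core (p := p) S A Set.univ hA (dependsOn_univ _)
  rw [Set.inter_univ, proj_univ, bernoulliPr_univ] at this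
  rw [this, mul_one]

lemma indep (S : Set E) [DecidablePred (· ∈ S)] (A B : Set (E → Bool))
    (hA : DependsOn A S) (hB : DependsOn B Sᶜ) :
    bernoulliPr p (A ∩ B) = bernoulliPr p A * bernoulliPr p B := by
  rw [core S A B hA hB, split S A hA, split Sᶜ B hB]

lemma reindex (g : E ≃ F) (A : Set (E → Bool)) :
    bernoulliPr p {η : F → Bool | (fun e => η (g e)) ∈ A} = bernoulliPr p A := by
  rw [bernoulliPr_eq, bernoulliPr_eq]
  rw [← Equiv.sum_comp (Equiv.arrowCongr g (Equiv.refl Bool))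
    (fun η : F → Bool => Set.indicator {η : F → Bool | (fun e => η (g e)) ∈ A}
      (fun ω' => ∏ e : F, w p (ω' e)) η)]
  refine Finset.sum_congr rfl fun ω _ => ?_
  have h1 : (fun e => ((Equiv.arrowCongr g (Equiv.refl Bool)) ω) (g e)) = ω := by
    funext e; simp
  have h2 : (∏ e : F, w p (((Equiv.arrowCongr g (Equiv.refl Bool)) ω) e)) =
      ∏ e : E, w p (ω e) := by
    rw [← Equiv.prod_comp g (fun f => w p (((Equiv.arrowCongr g (Equiv.refl Bool)) ω) f))]
    refine Finset.prod_congr rfl fun e _ => ?_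
    simp
  by_cases h : ω ∈ A
  · rw [Set.indicator_of_mem (by simpa [h1] using h), Set.indicator_of_mem h, h2]
  · rw [Set.indicator_of_notMem (by simpa [h1] using h), Set.indicator_of_notMem h]

lemma bp_irrel {G : Type*} (i1 i2 : Fintype G) (d1 d2 : DecidableEq G) (p : ℝ)
    (A B : Set (G → Bool)) (h : A = B) :
    @bernoulliPr G i1 d1 p A = @bernoulliPr G i2 d2 p B := by
  subst h
  congr! <;> exact Subsingleton.elim _ _

lemma inj (φ : E ↪ F) (A₀ : Set (E → Bool)) :
    bernoulliPr p {ω : F → Bool | (fun e => ω (φ e)) ∈ A₀} = bernoulliPr p A₀ := by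
  classical
  have hdep : DependsOn {ω : F → Bool | (fun e => ω (φ e)) ∈ A₀} (Set.range φ) := by
    intro ω ω' hagree
    have : (fun e => ω (φ e)) = (fun e => ω' (φ e)) := by
      funext e; exact hagree (φ e) ⟨e, rfl⟩
    simp only [Set.mem_setOf_eq, this]
  rw [split (Set.range φ) _ hdep]
  let g : E ≃ Set.range φ := Equiv.ofInjective φ φ.injective
  refine Eq.trans (bp_irrel _ _ _ _ p _
    {η : Set.range φ → Bool | (fun e => η (g e)) ∈ A₀} ?_) (reindex g A₀)
  ext σ
  simp only [proj, Set.mem_setOf_eq]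
  have hfun : (fun e => if h : φ e ∈ Set.range φ then σ ⟨φ e, h⟩ else false) =
      (fun e => σ (g e)) := by
    funext e
    rw [dif_pos (Set.mem_range_self e)]
    rfl
  rw [hfun]

lemma allFalse (K : Finset F) :
    bernoulliPr p {ω : F → Bool | ∀ e ∈ K, ω e = false} = (1 - p) ^ K.card := by
  classical
  let φ : {x // x ∈ K} ↪ F := ⟨fun u => u.1, Subtype.val_injective⟩
  have hset : {ω : F → Bool | ∀ e ∈ K, ω e = false} =
      {ω : F → Bool | (fun e : {x // x ∈ K} => ω (φ e)) ∈ ({fun _ => false} : Set ({x // x ∈ K} → Bool))} := by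
    ext ω
    simp only [Set.mem_setOf_eq, Set.mem_singleton_iff, funext_iff]
    constructor
    · intro h u; exact h u.1 u.2
    · intro h e he; exact h ⟨e, he⟩
  rw [hset, inj φ _, bernoulliPr_singleton (fun _ => false)]
  simp [w, Fintype.card_coe]
end BPr

namespace Sat

/-- edges restricted to variables in `S` -/
def resEdge {m : ℕ} (S : Set (Fin m)) (ω : Sym2 (Lit m) → Bool) (u v : Lit m) : Prop :=
  u.1 ∈ S ∧ v.1 ∈ S ∧ u.1 ≠ v.1 ∧ ω s(negLit u, v) = true

def resReach {m : ℕ} (S : Set (Fin m)) (ω : Sym2 (Lit m) → Bool) : Lit m → Lit m → Prop :=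
  Relation.ReflTransGen (resEdge S ω)

def litMap {k m : ℕ} (f : Fin k → Fin m) (ε : Fin k → Bool) (l : Lit k) : Lit m :=
  (f l.1, xor (ε l.1) l.2)

lemma litMap_negLit {k m : ℕ} (f : Fin k → Fin m) (ε : Fin k → Bool) (l : Lit k) :
    litMap f ε (negLit l) = negLit (litMap f ε l) := by
  obtain ⟨i, b⟩ := l
  simp only [litMap, negLit]
  cases ε i <;> cases b <;> rfl

lemma litMap_injective {k m : ℕ} {f : Fin k → Fin m} (hf : Function.Injective f)
    (ε : Fin k → Bool) : Function.Injective (litMap f ε) := by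
  rintro ⟨i, b⟩ ⟨j, c⟩ h
  simp only [litMap, Prod.mk.injEq] at h
  obtain ⟨h1, h2⟩ := h
  have hij : i = j := hf h1
  subst hij
  refine Prod.ext rfl ?_
  cases ε i <;> cases b <;> cases c <;> simp_all

lemma transfer {k m : ℕ} {f : Fin k → Fin m} (hf : Function.Injective f)
    (ε : Fin k → Bool) (ω : Sym2 (Lit m) → Bool) (a b : Lit k) :
    resReach (Set.range f) ω (litMap f ε a) (litMap f ε b) ↔
      freach (fun e => ω (Sym2.map (litMap f ε) e)) a b := by
  haveI : Nonempty (Fin k) := ⟨a.1⟩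
  set g := litMap f ε with hg
  set finv := Function.invFun f with hfinv
  have hfinvf : ∀ i, finv (f i) = i := fun i => Function.leftInverse_invFun hf i
  let h : Lit m → Lit k := fun l => (finv l.1, xor (ε (finv l.1)) l.2)
  have hgh : ∀ l : Lit m, l.1 ∈ Set.range f → g (h l) = l := by
    rintro ⟨i, b⟩ ⟨j, rfl⟩
    simp only [g, h, litMap, hfinvf]
    cases ε j <;> cases b <;> rfl
  have hhg : ∀ l : Lit k, h (g l) = l := by
    rintro ⟨i, b⟩
    simp only [g, h, litMap, hfinvf]
    cases ε i <;> cases b <;> rfl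
  have hgneg : ∀ l : Lit k, g (negLit l) = negLit (g l) := litMap_negLit f ε
  constructor
  · intro hr
    have := Relation.ReflTransGen.lift (p := fEdge (fun e => ω (Sym2.map g e))) h (fun u v huv => ?_) _ _ hr
    · rwa [Function.onFun, hhg, hhg] at this
    · obtain ⟨hu, hv, hne, hbit⟩ := huv
      refine ⟨?_, ?_⟩
      · intro hc
        apply hne
        rw [← hgh u hu, ← hgh v hv]
        show f (h u).1 = f (h v).1
        rw [hc]
      · show ω (Sym2.map g s(negLit (h u), h v)) = true
        rw [Sym2.map_pair_eq]
        show ω s(g (negLit (h u)), g (h v)) = true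
        rw [hgneg, hgh u hu, hgh v hv]
        exact hbit
  · intro hr
    have := Relation.ReflTransGen.lift (p := resEdge (Set.range f) ω) g (fun u v huv => ?_) _ _ hr
    · exact this
    · obtain ⟨hne, hbit⟩ := huv
      refine ⟨⟨u.1, rfl⟩, ⟨v.1, rfl⟩, fun hc => hne (hf hc), ?_⟩
      have : s(negLit (g u), g v) = Sym2.map g s(negLit u, v) := by
        rw [Sym2.map_pair_eq, hgneg]
      rw [this]
      exact hbit

lemma resReach_prob {k m : ℕ} {f : Fin k → Fin m} (hf : Function.Injective f)
    (ε : Fin k → Bool) (a b : Lit k) (p : ℝ) :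
    bernoulliPr p {ω : Sym2 (Lit m) → Bool |
        resReach (Set.range f) ω (litMap f ε a) (litMap f ε b)} =
      bernoulliPr p {η : Sym2 (Lit k) → Bool | freach η a b} := by
  let Φ : Sym2 (Lit k) ↪ Sym2 (Lit m) :=
    ⟨Sym2.map (litMap f ε), Sym2.map.injective (litMap_injective hf ε)⟩
  have hset : {ω : Sym2 (Lit m) → Bool |
      resReach (Set.range f) ω (litMap f ε a) (litMap f ε b)} =
      {ω : Sym2 (Lit m) → Bool |
        (fun e => ω (Φ e)) ∈ {η : Sym2 (Lit k) → Bool | freach η a b}} := by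
    ext ω
    simp only [Set.mem_setOf_eq]
    exact transfer hf ε ω a b
  rw [hset, BPr.inj Φ _]

lemma resReach_dependsOn {m : ℕ} (S : Set (Fin m)) (x y : Lit m) :
    ∀ ω ω' : Sym2 (Lit m) → Bool,
      (∀ e ∈ {e : Sym2 (Lit m) | ∀ l ∈ e, l.1 ∈ S}, ω e = ω' e) →
      (resReach S ω x y ↔ resReach S ω' x y) := by
  have key : ∀ ω ω' : Sym2 (Lit m) → Bool,
      (∀ e ∈ {e : Sym2 (Lit m) | ∀ l ∈ e, l.1 ∈ S}, ω e = ω' e) →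
      resReach S ω x y → resReach S ω' x y := by
    intro ω ω' hagree hr
    refine Relation.ReflTransGen.mono (fun u v huv => ?_) _ _ hr
    obtain ⟨hu, hv, hne, hbit⟩ := huv
    refine ⟨hu, hv, hne, ?_⟩
    rw [← hagree s(negLit u, v) ?_]
    · exact hbit
    · intro l hl
      rw [Sym2.mem_iff] at hl
      rcases hl with rfl | rfl
      · exact hu
      · exact hv
  intro ω ω' hagree
  exact ⟨key ω ω' hagree, key ω' ω (fun e he => (hagree e he).symm)⟩

end Sat

namespace Sat

variable {n : ℕ}

lemma negLit_negLit (l : Lit n) : negLit (negLit l) = l := by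
  obtain ⟨i, b⟩ := l; simp [negLit]

lemma negLit_embedLit (l : Lit n) : negLit (embedLit l) = embedLit (negLit l) := rfl

lemma embedLit_injective : Function.Injective (embedLit (n := n)) := by
  rintro ⟨i, b⟩ ⟨j, c⟩ h
  simpa [embedLit, Prod.ext_iff, Fin.castSucc_inj] using h

lemma fEdge_skew {ω : Sym2 (Lit n) → Bool} {a b : Lit n} (h : fEdge ω a b) :
    fEdge ω (negLit b) (negLit a) := by
  obtain ⟨hne, hbit⟩ := h
  refine ⟨fun hc => hne ?_, ?_⟩
  · simpa [negLit] using hc.symm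
  · rw [negLit_negLit]
    rw [show s(b, negLit a) = s(negLit a, b) from Sym2.eq_swap]
    exact hbit

lemma freach_skew {ω : Sym2 (Lit n) → Bool} {a b : Lit n} (h : freach ω a b) :
    freach ω (negLit b) (negLit a) := by
  induction h with
  | refl => exact Relation.ReflTransGen.refl
  | tail _ hbc ih => exact Relation.ReflTransGen.head (fEdge_skew hbc) ih

section Main
variable {p : ℝ} (x : Lit n) (X : Finset (Lit n))

/-- the variables of `X`, inside `Fin (n+1)` -/
def Vset (X : Finset (Lit n)) : Finset (Fin (n + 1)) := X.image fun u => Fin.castSucc u.1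

def zlit : Lit (n + 1) := (Fin.last n, true)
def zlit' : Lit (n + 1) := (Fin.last n, false)

def Xset (X : Finset (Lit n)) : Set (Lit (n + 1)) := embedLit '' (↑X : Set (Lit n))

lemma mem_Xset_var {X : Finset (Lit n)} {l : Lit (n + 1)} (h : l ∈ Xset X) :
    l.1 ∈ Vset X ∧ l.1 ≠ Fin.last n := by
  obtain ⟨u, hu, rfl⟩ := h
  exact ⟨Finset.mem_image.mpr ⟨u, hu, rfl⟩, (Fin.castSucc_lt_last u.1).ne⟩

lemma last_not_mem_Vset {X : Finset (Lit n)} : Fin.last n ∉ Vset X := by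
  intro hc
  obtain ⟨u, _, hu⟩ := Finset.mem_image.mp hc
  exact (Fin.castSucc_lt_last u.1).ne hu

lemma lit_of_var_mem {X : Finset (Lit n)} {l : Lit (n + 1)} (h : l.1 ∈ Vset X) :
    l ∈ Xset X ∨ negLit l ∈ Xset X := by
  obtain ⟨u, hu, huv⟩ := Finset.mem_image.mp h
  by_cases hb : l.2 = u.2
  · left
    exact ⟨u, hu, by obtain ⟨i, b⟩ := l; cases huv; cases hb; rfl⟩
  · right
    refine ⟨u, hu, ?_⟩
    obtain ⟨i, b⟩ := l
    obtain ⟨j, c⟩ := u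
    simp only at huv hb
    cases huv
    simp [embedLit, negLit, Prod.ext_iff]
    cases b <;> cases c <;> simp_all

lemma sd_not_mem {X : Finset (Lit n)} (hsd : SDset (↑X : Set (Lit n)))
    {l : Lit (n + 1)} (hl : l ∈ Xset X) : negLit l ∉ Xset X := by
  obtain ⟨u, hu, rfl⟩ := hl
  rw [negLit_embedLit]
  rintro ⟨v, hv, hveq⟩
  have := embedLit_injective hveq
  exact hsd u hu (this ▸ hv)

lemma lit_last_cases (b : Lit (n + 1)) (h : b.1 = Fin.last n) :
    b = zlit ∨ b = zlit' := by
  obtain ⟨i, c⟩ := b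
  simp only at h
  subst h
  cases c
  · right; rfl
  · left; rfl

variable {ω : Sym2 (Lit (n + 1)) → Bool}

/-- the events -/
def E1 (X : Finset (Lit n)) (ω : Sym2 (Lit (n + 1)) → Bool) : Prop :=
  ∃ u ∈ X, ω s(negLit (embedLit u), zlit) = true
def E2 (X : Finset (Lit n)) (ω : Sym2 (Lit (n + 1)) → Bool) : Prop :=
  ∃ u ∈ X, ω s(negLit (embedLit u), zlit') = true
def Sv (X : Finset (Lit n)) : Set (Fin (n + 1)) := {i | i ∉ Vset X}
def Cev (X : Finset (Lit n)) (ω : Sym2 (Lit (n + 1)) → Bool) : Prop :=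
  resReach (Sv X) ω zlit zlit'
def Cev' (X : Finset (Lit n)) (ω : Sym2 (Lit (n + 1)) → Bool) : Prop :=
  resReach (Sv X) ω zlit' zlit

lemma E1_iff : E1 X ω ↔ ∃ u ∈ Xset X, fEdge ω u zlit := by
  constructor
  · rintro ⟨u, hu, hbit⟩
    exact ⟨embedLit u, ⟨u, hu, rfl⟩, (Fin.castSucc_lt_last u.1).ne, hbit⟩
  · rintro ⟨u', ⟨u, hu, rfl⟩, _, hbit⟩
    exact ⟨u, hu, hbit⟩

lemma E2_iff : E2 X ω ↔ ∃ u ∈ Xset X, fEdge ω u zlit' := by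
  constructor
  · rintro ⟨u, hu, hbit⟩
    exact ⟨embedLit u, ⟨u, hu, rfl⟩, (Fin.castSucc_lt_last u.1).ne, hbit⟩
  · rintro ⟨u', ⟨u, hu, rfl⟩, _, hbit⟩
    exact ⟨u, hu, hbit⟩

lemma resReach_var {S : Set (Fin (n+1))} {a l : Lit (n+1)} (h : resReach S ω a l) :
    l = a ∨ l.1 ∈ S := by
  rcases Relation.ReflTransGen.cases_tail h with h | ⟨c, _, hc⟩
  · left; exact h
  · right; exact hc.2.1

section WithB
variable {x : Lit n} {X : Finset (Lit n)} {ω : Sym2 (Lit (n + 1)) → Bool}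
variable (hB : {y | reachBelow n ω (embedLit x) y} = Xset X)

include hB

lemma K1 {u v : Lit (n + 1)} (hu : u ∈ Xset X) (he : fEdge ω u v)
    (hv : v.1 ≠ Fin.last n) : v ∈ Xset X := by
  have huR : reachBelow n ω (embedLit x) u := by
    have : u ∈ Xset X := hu
    rw [← hB] at this
    exact this
  have hedge : edgeBelow n ω u v := by
    obtain ⟨u₀, _, rfl⟩ := hu
    exact ⟨by simp [embedLit, Fin.coe_castSucc, (u₀.1).isLt], Fin.val_lt_last hv,
      he.1, he.2⟩
  have : v ∈ {y | reachBelow n ω (embedLit x) y} := huR.tail hedge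
  rwa [hB] at this

lemma K3 {u : Lit (n + 1)} (hu : u ∈ Xset X) : freach ω (embedLit x) u := by
  have : u ∈ {y | reachBelow n ω (embedLit x) y} := by rw [hB]; exact hu
  exact Relation.ReflTransGen.mono (fun a b hab => ⟨hab.2.2.1, hab.2.2.2⟩) _ _ this

/-- escape from `Xset` is only possible into the literals of the new
variable -/
lemma escape {u v : Lit (n + 1)} (hu : u ∈ Xset X) (he : fEdge ω u v) :
    v ∈ Xset X ∨ v = zlit ∨ v = zlit' := by
  by_cases hv : v.1 = Fin.last n
  · right; exact lit_last_cases v hv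
  · left; exact K1 hB hu he hv

lemma E2_of_edge {u : Lit (n + 1)} (hu : u ∈ Xset X) (he : fEdge ω u zlit') :
    E2 X ω := (E2_iff X).mpr ⟨u, hu, he⟩

/-- entry into the negations of `Xset` -/
lemma entry {w v : Lit (n + 1)} (hv : negLit v ∈ Xset X) (he : fEdge ω w v) :
    negLit w ∈ Xset X ∨ w.1 = Fin.last n := by
  have he' : fEdge ω (negLit v) (negLit w) := fEdge_skew he
  by_cases hw : w.1 = Fin.last n
  · right; exact hw
  · left
    exact K1 hB hv he' (by simpa [negLit] using hw)

/-- case `E1 ∧ ¬E2` : the invariant -/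
lemma invariant1 (hE2 : ¬ E2 X ω) {l : Lit (n + 1)}
    (hl : freach ω (embedLit x) l) (hx : x ∈ X) :
    l ∈ Xset X ∨ resReach (Sv X) ω zlit l ∨ resReach (Sv X) ω zlit zlit' := by
  induction hl with
  | refl => exact Or.inl ⟨x, hx, rfl⟩
  | @tail b c _ hbc ih =>
    rcases ih with hbX | hzb | hdone
    · -- b ∈ Xset X
      rcases escape hB hbX hbc with hcX | rfl | rfl
      · exact Or.inl hcX
      · exact Or.inr (Or.inl Relation.ReflTransGen.refl)
      · exact absurd (E2_of_edge hB hbX hbc) hE2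
    · -- resReach (Sv X) ω zlit b
      have hbout : b.1 ∉ Vset X := by
        rcases resReach_var hzb with rfl | hbS
        · exact last_not_mem_Vset
        · exact hbS
      by_cases hcV : c.1 ∈ Vset X
      · rcases lit_of_var_mem hcV with hcX | hncX
        · exact Or.inl hcX
        · -- negLit c ∈ Xset X : entry
          rcases entry hB hncX hbc with hnb | hblast
          · exact absurd (mem_Xset_var hnb).1 (by simpa [negLit] using hbout)
          · rcases lit_last_cases b hblast with rfl | rfl
            · -- b = zlit : edge zlit → c with negLit c ∈ X' gives E2
              have : fEdge ω (negLit c) (negLit zlit) := fEdge_skew hbc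
              exact absurd (E2_of_edge hB hncX this) hE2
            · -- b = zlit' : done
              exact Or.inr (Or.inr hzb)
      · -- c outside : extend the restricted path
        refine Or.inr (Or.inl (hzb.tail ?_))
        exact ⟨hbout, hcV, hbc.1, hbc.2⟩
    · exact Or.inr (Or.inr hdone)

/-- case `¬E1 ∧ E2` : the mirror invariant -/
lemma invariant2 (hE1 : ¬ E1 X ω) {l : Lit (n + 1)}
    (hl : freach ω (embedLit x) l) (hx : x ∈ X) :
    l ∈ Xset X ∨ resReach (Sv X) ω zlit' l ∨ resReach (Sv X) ω zlit' zlit := by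
  induction hl with
  | refl => exact Or.inl ⟨x, hx, rfl⟩
  | @tail b c _ hbc ih =>
    rcases ih with hbX | hzb | hdone
    · rcases escape hB hbX hbc with hcX | rfl | rfl
      · exact Or.inl hcX
      · exact absurd ((E1_iff X).mpr ⟨b, hbX, hbc⟩) hE1
      · exact Or.inr (Or.inl Relation.ReflTransGen.refl)
    · have hbout : b.1 ∉ Vset X := by
        rcases resReach_var hzb with rfl | hbS
        · exact last_not_mem_Vset
        · exact hbS
      by_cases hcV : c.1 ∈ Vset X
      · rcases lit_of_var_mem hcV with hcX | hncX
        · exact Or.inl hcX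
        · rcases entry hB hncX hbc with hnb | hblast
          · exact absurd (mem_Xset_var hnb).1 (by simpa [negLit] using hbout)
          · rcases lit_last_cases b hblast with rfl | rfl
            · exact Or.inr (Or.inr hzb)
            · have : fEdge ω (negLit c) (negLit zlit') := fEdge_skew hbc
              exact absurd ((E1_iff X).mpr ⟨negLit c, hncX, this⟩) hE1
      · refine Or.inr (Or.inl (hzb.tail ?_))
        exact ⟨hbout, hcV, hbc.1, hbc.2⟩
    · exact Or.inr (Or.inr hdone)

/-- case `¬E1 ∧ ¬E2` : the out-set does not grow -/
lemma invariant0 (hE1 : ¬ E1 X ω) (hE2 : ¬ E2 X ω) {l : Lit (n + 1)}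
    (hl : freach ω (embedLit x) l) (hx : x ∈ X) : l ∈ Xset X := by
  induction hl with
  | refl => exact ⟨x, hx, rfl⟩
  | @tail b c _ hbc ih =>
    rcases escape hB ih hbc with hcX | rfl | rfl
    · exact hcX
    · exact absurd ((E1_iff X).mpr ⟨b, ih, hbc⟩) hE1
    · exact absurd (E2_of_edge hB ih hbc) hE2

omit hB in
lemma resReach_freach {S : Set (Fin (n + 1))} {a b : Lit (n + 1)}
    (h : resReach S ω a b) : freach ω a b :=
  Relation.ReflTransGen.mono (fun _ _ h => ⟨h.2.2.1, h.2.2.2⟩) _ _ h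

omit hB in
lemma negLit_zlit : negLit (zlit : Lit (n + 1)) = zlit' := rfl
omit hB in
lemma negLit_zlit' : negLit (zlit' : Lit (n + 1)) = zlit := rfl

lemma main_iff (hsd : SDset (↑X : Set (Lit n))) (hx : x ∈ X) :
    freach ω (embedLit x) (negLit (embedLit x)) ↔
      (E1 X ω ∧ E2 X ω) ∨ (E1 X ω ∧ ¬ E2 X ω ∧ Cev X ω) ∨
        (¬ E1 X ω ∧ E2 X ω ∧ Cev' X ω) := by
  have hxX : embedLit x ∈ Xset X := ⟨x, hx, rfl⟩
  have hnxX : negLit (embedLit x) ∉ Xset X := sd_not_mem hsd hxX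
  have hnxvar : (negLit (embedLit x)).1 ∈ Vset X := by
    show (embedLit x).1 ∈ Vset X
    exact (mem_Xset_var hxX).1
  constructor
  · intro hr
    by_cases hE1 : E1 X ω <;> by_cases hE2 : E2 X ω
    · exact Or.inl ⟨hE1, hE2⟩
    · refine Or.inr (Or.inl ⟨hE1, hE2, ?_⟩)
      rcases invariant1 hB hE2 hr hx with h | h | h
      · exact absurd h hnxX
      · rcases resReach_var h with heq | hS
        · exact absurd (congrArg Prod.fst heq)
            (by simp [zlit, negLit, embedLit, (Fin.castSucc_lt_last x.1).ne])
        · exact absurd hnxvar hS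
      · exact h
    · refine Or.inr (Or.inr ⟨hE1, hE2, ?_⟩)
      rcases invariant2 hB hE1 hr hx with h | h | h
      · exact absurd h hnxX
      · rcases resReach_var h with heq | hS
        · exact absurd (congrArg Prod.fst heq)
            (by simp [zlit', negLit, embedLit, (Fin.castSucc_lt_last x.1).ne])
        · exact absurd hnxvar hS
      · exact h
    · exact absurd (invariant0 hB hE1 hE2 hr hx) hnxX
  · rintro (⟨hE1, hE2⟩ | ⟨hE1, _, hC⟩ | ⟨_, hE2, hC'⟩)
    · obtain ⟨u, huX, heu⟩ := (E1_iff X).mp hE1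
      obtain ⟨v, hvX, hev⟩ := (E2_iff X).mp hE2
      have t1 : freach ω (embedLit x) u := K3 hB huX
      have t3 : fEdge ω zlit (negLit v) := by
        have := fEdge_skew hev
        rwa [negLit_zlit'] at this
      have t4 : freach ω (negLit v) (negLit (embedLit x)) := freach_skew (K3 hB hvX)
      exact (((t1.tail heu).tail t3).trans t4)
    · obtain ⟨u, huX, heu⟩ := (E1_iff X).mp hE1
      have t1 : freach ω (embedLit x) u := K3 hB huX
      have hCf : freach ω zlit zlit' := resReach_freach hC
      have t3 : fEdge ω zlit' (negLit u) := by
        have := fEdge_skew heu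
        rwa [negLit_zlit] at this
      have t4 : freach ω (negLit u) (negLit (embedLit x)) := freach_skew (K3 hB huX)
      exact ((((t1.tail heu).trans hCf).tail t3).trans t4)
    · obtain ⟨v, hvX, hev⟩ := (E2_iff X).mp hE2
      have t1 : freach ω (embedLit x) v := K3 hB hvX
      have hCf : freach ω zlit' zlit := resReach_freach hC'
      have t3 : fEdge ω zlit (negLit v) := by
        have := fEdge_skew hev
        rwa [negLit_zlit'] at this
      have t4 : freach ω (negLit v) (negLit (embedLit x)) := freach_skew (K3 hB hvX)
      exact ((((t1.tail hev).trans hCf).tail t3).trans t4)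

end WithB
end Main
end Sat


namespace Sat
variable {n : ℕ}

section Glue
variable {x : Lit n} {X : Finset (Lit n)}

lemma var_injOn (hsd : SDset (↑X : Set (Lit n))) :
    ∀ u ∈ X, ∀ v ∈ X, u.1 = v.1 → u = v := by
  rintro ⟨i, b⟩ hu ⟨j, c⟩ hv (h : i = j)
  subst h
  by_cases hbc : b = c
  · rw [hbc]
  · exfalso
    apply hsd (i, b) hu
    have : negLit (i, b) = (i, c) := by
      simp only [negLit]
      cases b <;> cases c <;> simp_all
    rw [this]
    exact hv

lemma card_Vset (hsd : SDset (↑X : Set (Lit n))) : (Vset X).card = X.card := by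
  refine Finset.card_image_of_injOn ?_
  intro u hu v hv h
  exact var_injOn hsd u hu v hv (Fin.castSucc_inj.mp h)

lemma card_X_le (hsd : SDset (↑X : Set (Lit n))) : X.card ≤ n := by
  have h1 : (X.image fun u => u.1).card = X.card :=
    Finset.card_image_of_injOn fun u hu v hv h => var_injOn hsd u hu v hv h
  calc X.card = (X.image fun u => u.1).card := h1.symm
    _ ≤ Fintype.card (Fin n) := Finset.card_le_univ _
    _ = n := Fintype.card_fin n

/-- the coordinate classes -/
def SB (X : Finset (Lit n)) : Set (Sym2 (Lit (n + 1))) :=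
  {e | (∀ l ∈ e, l.1 ≠ Fin.last n) ∧ ∃ l ∈ e, l.1 ∈ Vset X}
def S1 (X : Finset (Lit n)) : Set (Sym2 (Lit (n + 1))) :=
  {e | ∃ u ∈ X, e = s(negLit (embedLit u), zlit)}
def S2 (X : Finset (Lit n)) : Set (Sym2 (Lit (n + 1))) :=
  {e | ∃ u ∈ X, e = s(negLit (embedLit u), zlit')}
def Sout (X : Finset (Lit n)) : Set (Sym2 (Lit (n + 1))) :=
  {e | ∀ l ∈ e, l.1 ∉ Vset X}

lemma S1_subset_SBc : S1 X ⊆ (SB X)ᶜ := by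
  rintro e ⟨u, hu, rfl⟩ ⟨hall, _⟩
  exact hall zlit (Sym2.mem_iff.mpr (Or.inr rfl)) rfl

lemma S2_subset_SBc : S2 X ⊆ (SB X)ᶜ := by
  rintro e ⟨u, hu, rfl⟩ ⟨hall, _⟩
  exact hall zlit' (Sym2.mem_iff.mpr (Or.inr rfl)) rfl

lemma Sout_subset_SBc : Sout X ⊆ (SB X)ᶜ := by
  rintro e hout ⟨_, l, hl, hlV⟩
  exact hout l hl hlV

lemma S2_subset_S1c : S2 X ⊆ (S1 X)ᶜ := by
  rintro e ⟨u, hu, rfl⟩ ⟨v, hv, hev⟩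
  rw [Sym2.eq_iff] at hev
  rcases hev with ⟨h1, h2⟩ | ⟨h1, h2⟩
  · exact Bool.false_ne_true (congrArg Prod.snd h2)
  · exact (Fin.castSucc_lt_last u.1).ne (congrArg Prod.fst h1 : _)

lemma Sout_subset_S1c : Sout X ⊆ (S1 X)ᶜ := by
  rintro e hout ⟨u, hu, rfl⟩
  exact hout (negLit (embedLit u)) (Sym2.mem_iff.mpr (Or.inl rfl))
    (Finset.mem_image.mpr ⟨u, hu, rfl⟩)

lemma Sout_subset_S2c : Sout X ⊆ (S2 X)ᶜ := by
  rintro e hout ⟨u, hu, rfl⟩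
  exact hout (negLit (embedLit u)) (Sym2.mem_iff.mpr (Or.inl rfl))
    (Finset.mem_image.mpr ⟨u, hu, rfl⟩)

/-- the events, as sets of configurations -/
def Bev (x : Lit n) (X : Finset (Lit n)) : Set (Sym2 (Lit (n + 1)) → Bool) :=
  {ω | {y | reachBelow n ω (embedLit x) y} = Xset X}
def E1ev (X : Finset (Lit n)) : Set (Sym2 (Lit (n + 1)) → Bool) := {ω | E1 X ω}
def E2ev (X : Finset (Lit n)) : Set (Sym2 (Lit (n + 1)) → Bool) := {ω | E2 X ω}
def Cset (X : Finset (Lit n)) : Set (Sym2 (Lit (n + 1)) → Bool) := {ω | Cev X ω}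
def Cset' (X : Finset (Lit n)) : Set (Sym2 (Lit (n + 1)) → Bool) := {ω | Cev' X ω}

lemma E1ev_dep : BPr.DependsOn (E1ev X) (S1 X) := by
  intro ω ω' hagree
  simp only [E1ev, E1, Set.mem_setOf_eq]
  constructor <;> rintro ⟨u, hu, hbit⟩ <;> refine ⟨u, hu, ?_⟩
  · rw [← hagree _ ⟨u, hu, rfl⟩]; exact hbit
  · rw [hagree _ ⟨u, hu, rfl⟩]; exact hbit

lemma E2ev_dep : BPr.DependsOn (E2ev X) (S2 X) := by
  intro ω ω' hagree
  simp only [E2ev, E2, Set.mem_setOf_eq]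
  constructor <;> rintro ⟨u, hu, hbit⟩ <;> refine ⟨u, hu, ?_⟩
  · rw [← hagree _ ⟨u, hu, rfl⟩]; exact hbit
  · rw [hagree _ ⟨u, hu, rfl⟩]; exact hbit

lemma Cset_dep : BPr.DependsOn (Cset X) (Sout X) := by
  intro ω ω' hagree
  exact resReach_dependsOn {i | i ∉ Vset X} zlit zlit' ω ω' fun e he => hagree e he

lemma Cset'_dep : BPr.DependsOn (Cset' X) (Sout X) := by
  intro ω ω' hagree
  exact resReach_dependsOn {i | i ∉ Vset X} zlit' zlit ω ω' fun e he => hagree e he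

lemma Bev_half {ω ω' : Sym2 (Lit (n + 1)) → Bool}
    (hagree : ∀ e ∈ SB X, ω e = ω' e) (hω : ω ∈ Bev x X) : ω' ∈ Bev x X := by
  have hsub : ∀ y, reachBelow n ω' (embedLit x) y → y ∈ Xset X := by
    intro y hy
    induction hy with
    | refl =>
      have : embedLit x ∈ {y | reachBelow n ω (embedLit x) y} :=
        Relation.ReflTransGen.refl
      rwa [hω] at this
    | @tail b c hab hbc ih =>
      have hbvar := mem_Xset_var ih
      have he : s(negLit b, c) ∈ SB X := by
        constructor
        · intro l hl
          rcases Sym2.mem_iff.mp hl with rfl | rfl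
          · exact hbvar.2
          · intro hc
            have := hbc.2.1
            rw [hc] at this
            simp [Fin.last] at this
        · exact ⟨negLit b, Sym2.mem_iff.mpr (Or.inl rfl), hbvar.1⟩
      have hedge : edgeBelow n ω b c := ⟨hbc.1, hbc.2.1, hbc.2.2.1, by
        rw [hagree _ he]; exact hbc.2.2.2⟩
      have hbR : reachBelow n ω (embedLit x) b := by
        have : b ∈ Xset X := ih
        rw [← hω] at this
        exact this
      have : c ∈ {y | reachBelow n ω (embedLit x) y} := hbR.tail hedge
      rwa [hω] at this
  have hsup : ∀ y, reachBelow n ω (embedLit x) y → reachBelow n ω' (embedLit x) y := by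
    intro y hy
    induction hy with
    | refl => exact Relation.ReflTransGen.refl
    | @tail b c hab hbc ih =>
      have hbX : b ∈ Xset X := by
        have : b ∈ {y | reachBelow n ω (embedLit x) y} := hab
        rwa [hω] at this
      have hcX : c ∈ Xset X := by
        have : c ∈ {y | reachBelow n ω (embedLit x) y} := hab.tail hbc
        rwa [hω] at this
      have he : s(negLit b, c) ∈ SB X := by
        constructor
        · intro l hl
          rcases Sym2.mem_iff.mp hl with rfl | rfl
          · exact (mem_Xset_var hbX).2
          · exact (mem_Xset_var hcX).2
        · exact ⟨negLit b, Sym2.mem_iff.mpr (Or.inl rfl), (mem_Xset_var hbX).1⟩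
      exact ih.tail ⟨hbc.1, hbc.2.1, hbc.2.2.1, by rw [← hagree _ he]; exact hbc.2.2.2⟩
  show {y | reachBelow n ω' (embedLit x) y} = Xset X
  ext y
  constructor
  · exact fun hy => hsub y hy
  · intro hy
    have : y ∈ {y | reachBelow n ω (embedLit x) y} := by rw [hω]; exact hy
    exact hsup y this

lemma Bev_dep : BPr.DependsOn (Bev x X) (SB X) := by
  intro ω ω' hagree
  exact ⟨Bev_half hagree, Bev_half fun e he => (hagree e he).symm⟩

end Glue
end Sat


namespace Sat
variable {n : ℕ} {p : ℝ}

section Probs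
variable {x : Lit n} {X : Finset (Lit n)}

lemma negLit_injective : Function.Injective (negLit (n := n)) := by
  intro a b h
  have := congrArg negLit h
  rwa [negLit_negLit, negLit_negLit] at this

lemma coord1_injOn :
    ∀ u ∈ X, ∀ v ∈ X, s(negLit (embedLit u), (zlit : Lit (n+1)))
      = s(negLit (embedLit v), zlit) → u = v := by
  intro u hu v hv h
  rw [Sym2.eq_iff] at h
  rcases h with ⟨h1, _⟩ | ⟨h1, _⟩
  · exact embedLit_injective (negLit_injective h1)
  · exact absurd (congrArg Prod.fst h1 : (embedLit u).1 = Fin.last n)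
      (Fin.castSucc_lt_last u.1).ne

lemma coord2_injOn :
    ∀ u ∈ X, ∀ v ∈ X, s(negLit (embedLit u), (zlit' : Lit (n+1)))
      = s(negLit (embedLit v), zlit') → u = v := by
  intro u hu v hv h
  rw [Sym2.eq_iff] at h
  rcases h with ⟨h1, _⟩ | ⟨h1, _⟩
  · exact embedLit_injective (negLit_injective h1)
  · exact absurd (congrArg Prod.fst h1 : (embedLit u).1 = Fin.last n)
      (Fin.castSucc_lt_last u.1).ne

lemma prob_E1c : bernoulliPr p (E1ev X)ᶜ = (1 - p) ^ X.card := by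
  classical
  have hset : (E1ev X)ᶜ = {ω : Sym2 (Lit (n+1)) → Bool |
      ∀ e ∈ X.image (fun u => s(negLit (embedLit u), (zlit : Lit (n+1)))), ω e = false} := by
    ext ω
    simp only [E1ev, E1, Set.mem_compl_iff, Set.mem_setOf_eq, not_exists, not_and]
    constructor
    · intro h e he
      obtain ⟨u, hu, rfl⟩ := Finset.mem_image.mp he
      simpa using h u hu
    · intro h u hu
      simp [h _ (Finset.mem_image_of_mem _ hu)]
  rw [hset, BPr.allFalse, Finset.card_image_of_injOn coord1_injOn]

lemma prob_E2c : bernoulliPr p (E2ev X)ᶜ = (1 - p) ^ X.card := by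
  classical
  have hset : (E2ev X)ᶜ = {ω : Sym2 (Lit (n+1)) → Bool |
      ∀ e ∈ X.image (fun u => s(negLit (embedLit u), (zlit' : Lit (n+1)))), ω e = false} := by
    ext ω
    simp only [E2ev, E2, Set.mem_compl_iff, Set.mem_setOf_eq, not_exists, not_and]
    constructor
    · intro h e he
      obtain ⟨u, hu, rfl⟩ := Finset.mem_image.mp he
      simpa using h u hu
    · intro h u hu
      simp [h _ (Finset.mem_image_of_mem _ hu)]
  rw [hset, BPr.allFalse, Finset.card_image_of_injOn coord2_injOn]

lemma prob_E1 : bernoulliPr p (E1ev X) = 1 - (1 - p) ^ X.card := by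
  have h1 := BPr.bernoulliPr_compl (p := p) (E1ev X)
  have h2 := prob_E1c (p := p) (X := X)
  linarith

lemma prob_E2 : bernoulliPr p (E2ev X) = 1 - (1 - p) ^ X.card := by
  have h1 := BPr.bernoulliPr_compl (p := p) (E2ev X)
  have h2 := prob_E2c (p := p) (X := X)
  linarith

lemma prob_res (hsd : SDset (↑X : Set (Lit n))) (bb : Bool) :
    bernoulliPr p {ω : Sym2 (Lit (n+1)) → Bool |
        resReach (Sv X) ω (Fin.last n, bb) (Fin.last n, !bb)} =
      spineProb (n + 1 - X.card) p := by
  classical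
  set k := n + 1 - X.card with hkdef
  have hXle : X.card ≤ n := card_X_le hsd
  have hk : 0 < k := by omega
  have hW : (Finset.univ \ Vset X).card = k := by
    rw [Finset.card_sdiff_of_subset (Finset.subset_univ _), Finset.card_univ,
      Fintype.card_fin, card_Vset hsd]
  set iso := (Finset.univ \ Vset X).orderIsoOfFin hW with hiso
  have hlastW : Fin.last n ∈ Finset.univ \ Vset X := by
    rw [Finset.mem_sdiff]
    exact ⟨Finset.mem_univ _, last_not_mem_Vset⟩
  set j : Fin k := iso.symm ⟨Fin.last n, hlastW⟩ with hj
  set f : Fin k → Fin (n + 1) := fun i => (iso (Equiv.swap ⟨0, hk⟩ j i) : Fin (n + 1)) with hf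
  have hfinj : Function.Injective f := by
    intro a b h
    exact (Equiv.swap ⟨0, hk⟩ j).injective (iso.injective (Subtype.ext h))
  have hrange : Set.range f = Sv X := by
    ext i
    constructor
    · rintro ⟨a, rfl⟩
      have : (iso (Equiv.swap ⟨0, hk⟩ j a) : Fin (n + 1)) ∈ Finset.univ \ Vset X := (iso _).2
      exact (Finset.mem_sdiff.mp this).2
    · intro hi
      have hiW : i ∈ Finset.univ \ Vset X := Finset.mem_sdiff.mpr ⟨Finset.mem_univ _, hi⟩
      refine ⟨Equiv.swap ⟨0, hk⟩ j (iso.symm ⟨i, hiW⟩), ?_⟩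
      rw [hf]
      simp only [Equiv.swap_apply_self]
      rw [OrderIso.apply_symm_apply]
    
  have hf0 : f ⟨0, hk⟩ = Fin.last n := by
    rw [hf]
    simp only [Equiv.swap_apply_left]
    rw [hj, OrderIso.apply_symm_apply]
  have key := resReach_prob hfinj (fun _ => !bb) (⟨0, hk⟩, true) (⟨0, hk⟩, false) p
  have h1 : litMap f (fun _ => !bb) (⟨0, hk⟩, true) = (Fin.last n, bb) := by
    simp only [litMap, hf0]
    cases bb <;> rfl
  have h2 : litMap f (fun _ => !bb) (⟨0, hk⟩, false) = (Fin.last n, !bb) := by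
    simp only [litMap, hf0]
    cases bb <;> rfl
  rw [hrange, h1, h2] at key
  rw [key, spineProb, dif_pos hk]
  rfl

lemma prob_C (hsd : SDset (↑X : Set (Lit n))) :
    bernoulliPr p (Cset X) = spineProb (n + 1 - X.card) p := by
  have := prob_res (p := p) hsd true
  convert this using 2
  rfl

lemma prob_C' (hsd : SDset (↑X : Set (Lit n))) :
    bernoulliPr p (Cset' X) = spineProb (n + 1 - X.card) p := by
  have := prob_res (p := p) hsd false
  convert this using 2
  rfl

end Probs
end Sat

/-- Conditional on the out-set of `x` in `F_{n,p}` equalling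
the fixed strictly distinct set `X`, the probability that `x ⇝ x̄` in
`F_{n+1,p}` is
`[1−(1−p)^{|X|}]² + 2[1−(1−p)^{|X|}](1−p)^{|X|}·Pr(x⇝x̄ in F_{n+1−|X|,p})`,
which is at most `p²|X|² + 2p|X|·Pr(x⇝x̄ in F_{n+1−|X|,p})`.
(The conditional statement is expressed multiplied through by the probability
of the conditioning event.) -/
theorem cond_reach_after_adding_variable (n : ℕ) (p : ℝ)
    (hp0 : 0 ≤ p) (hp1 : p ≤ 1) (x : Lit n) (X : Finset (Lit n))
    (hxX : x ∈ X) (hsd : SDset (↑X : Set (Lit n))) :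
    bernoulliPr p
        ({ω : Sym2 (Lit (n + 1)) → Bool | freach ω (embedLit x) (negLit (embedLit x))} ∩
          {ω : Sym2 (Lit (n + 1)) → Bool |
            {y | reachBelow n ω (embedLit x) y} = embedLit '' (↑X : Set (Lit n))}) =
      ((1 - (1 - p) ^ X.card) ^ 2 +
          2 * (1 - (1 - p) ^ X.card) * (1 - p) ^ X.card *
            spineProb (n + 1 - X.card) p) *
        bernoulliPr p
          {ω : Sym2 (Lit (n + 1)) → Bool |
            {y | reachBelow n ω (embedLit x) y} = embedLit '' (↑X : Set (Lit n))} ∧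
    (1 - (1 - p) ^ X.card) ^ 2 +
        2 * (1 - (1 - p) ^ X.card) * (1 - p) ^ X.card *
          spineProb (n + 1 - X.card) p ≤
      p ^ 2 * (X.card : ℝ) ^ 2 +
        2 * p * (X.card : ℝ) * spineProb (n + 1 - X.card) p := by
  classical
  obtain ⟨hxX, hsd⟩ := And.intro hxX hsd
  set c := X.card with hc
  set q : ℝ := 1 - (1 - p) ^ c with hq
  set r : ℝ := (1 - p) ^ c with hr
  set s : ℝ := spineProb (n + 1 - c) p with hs
  have hBev : Sat.Bev x X = {ω : Sym2 (Lit (n + 1)) → Bool |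
      {y | reachBelow n ω (embedLit x) y} = embedLit '' (↑X : Set (Lit n))} := rfl
  have hs0 : 0 ≤ s := by
    rw [hs, spineProb]
    split
    · exact BPr.bernoulliPr_nonneg hp0 hp1 _
    · exact le_refl 0
  constructor
  · -- the equality
    set U1 := Sat.Bev x X ∩ (Sat.E1ev X ∩ Sat.E2ev X) with hU1
    set U2 := Sat.Bev x X ∩ (Sat.E1ev X ∩ ((Sat.E2ev X)ᶜ ∩ Sat.Cset X)) with hU2
    set U3 := Sat.Bev x X ∩ ((Sat.E1ev X)ᶜ ∩ (Sat.E2ev X ∩ Sat.Cset' X)) with hU3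
    have hsetU : {ω : Sym2 (Lit (n + 1)) → Bool |
          freach ω (embedLit x) (negLit (embedLit x))} ∩
        {ω : Sym2 (Lit (n + 1)) → Bool |
          {y | reachBelow n ω (embedLit x) y} = embedLit '' (↑X : Set (Lit n))} =
        U1 ∪ U2 ∪ U3 := by
      ext ω
      constructor
      · rintro ⟨hA, hB⟩
        have hB' : ω ∈ Sat.Bev x X := hB
        rcases (Sat.main_iff (hB := hB') hsd hxX).mp hA with ⟨h1, h2⟩ | ⟨h1, h2, h3⟩ |
          ⟨h1, h2, h3⟩
        · exact Or.inl (Or.inl ⟨hB', h1, h2⟩)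
        · exact Or.inl (Or.inr ⟨hB', h1, h2, h3⟩)
        · exact Or.inr ⟨hB', h1, h2, h3⟩
      · rintro ((⟨hB', h1, h2⟩ | ⟨hB', h1, h2, h3⟩) | ⟨hB', h1, h2, h3⟩)
        · exact ⟨(Sat.main_iff (hB := hB') hsd hxX).mpr (Or.inl ⟨h1, h2⟩), hB'⟩
        · exact ⟨(Sat.main_iff (hB := hB') hsd hxX).mpr (Or.inr (Or.inl ⟨h1, h2, h3⟩)), hB'⟩
        · exact ⟨(Sat.main_iff (hB := hB') hsd hxX).mpr (Or.inr (Or.inr ⟨h1, h2, h3⟩)), hB'⟩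
    have d12 : Disjoint U1 U2 := by
      rw [Set.disjoint_left]
      rintro ω ⟨_, _, h2⟩ ⟨_, _, hn2, _⟩
      exact hn2 h2
    have d13 : Disjoint U1 U3 := by
      rw [Set.disjoint_left]
      rintro ω ⟨_, h1, _⟩ ⟨_, hn1, _⟩
      exact hn1 h1
    have d23 : Disjoint U2 U3 := by
      rw [Set.disjoint_left]
      rintro ω ⟨_, h1, _⟩ ⟨_, hn1, _⟩
      exact hn1 h1
    have hPr1 : bernoulliPr p U1 =
        bernoulliPr p (Sat.Bev x X) * (bernoulliPr p (Sat.E1ev X) * bernoulliPr p (Sat.E2ev X)) := by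
      rw [hU1, BPr.indep (Sat.SB X) _ _ Sat.Bev_dep
        (((Sat.E1ev_dep).mono Sat.S1_subset_SBc).inter ((Sat.E2ev_dep).mono Sat.S2_subset_SBc)),
        BPr.indep (Sat.S1 X) _ _ Sat.E1ev_dep ((Sat.E2ev_dep).mono Sat.S2_subset_S1c)]
    have hPr2 : bernoulliPr p U2 =
        bernoulliPr p (Sat.Bev x X) * (bernoulliPr p (Sat.E1ev X) *
          (bernoulliPr p (Sat.E2ev X)ᶜ * bernoulliPr p (Sat.Cset X))) := by
      rw [hU2, BPr.indep (Sat.SB X) _ _ Sat.Bev_dep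
        (((Sat.E1ev_dep).mono Sat.S1_subset_SBc).inter
          (((Sat.E2ev_dep).compl.mono Sat.S2_subset_SBc).inter
            ((Sat.Cset_dep).mono Sat.Sout_subset_SBc))),
        BPr.indep (Sat.S1 X) _ _ Sat.E1ev_dep
          (((Sat.E2ev_dep).compl.mono Sat.S2_subset_S1c).inter
            ((Sat.Cset_dep).mono Sat.Sout_subset_S1c)),
        BPr.indep (Sat.S2 X) _ _ (Sat.E2ev_dep).compl
          ((Sat.Cset_dep).mono Sat.Sout_subset_S2c)]
    have hPr3 : bernoulliPr p U3 =
        bernoulliPr p (Sat.Bev x X) * (bernoulliPr p (Sat.E1ev X)ᶜ *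
          (bernoulliPr p (Sat.E2ev X) * bernoulliPr p (Sat.Cset' X))) := by
      rw [hU3, BPr.indep (Sat.SB X) _ _ Sat.Bev_dep
        (((Sat.E1ev_dep).compl.mono Sat.S1_subset_SBc).inter
          (((Sat.E2ev_dep).mono Sat.S2_subset_SBc).inter
            ((Sat.Cset'_dep).mono Sat.Sout_subset_SBc))),
        BPr.indep (Sat.S1 X) _ _ (Sat.E1ev_dep).compl
          (((Sat.E2ev_dep).mono Sat.S2_subset_S1c).inter
            ((Sat.Cset'_dep).mono Sat.Sout_subset_S1c)),
        BPr.indep (Sat.S2 X) _ _ Sat.E2ev_dep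
          ((Sat.Cset'_dep).mono Sat.Sout_subset_S2c)]
    rw [hsetU, BPr.bernoulliPr_union_disjoint (Set.disjoint_union_left.mpr ⟨d13, d23⟩),
      BPr.bernoulliPr_union_disjoint d12, hPr1, hPr2, hPr3,
      Sat.prob_E1, Sat.prob_E2, Sat.prob_E1c, Sat.prob_E2c, Sat.prob_C hsd, Sat.prob_C' hsd,
      hBev]
    ring
  · -- the inequality
    have hr0 : (0:ℝ) ≤ r := by
      rw [hr]; exact pow_nonneg (by linarith) c
    have hr1 : r ≤ 1 := by
      rw [hr]; exact pow_le_one₀ (by linarith) (by linarith)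
    have hq0 : (0:ℝ) ≤ q := by rw [hq]; linarith
    have hqr : q + r = 1 := by rw [hq, hr]; ring
    have hqle : q ≤ p * c := by
      have h := one_add_mul_le_pow (show (-2:ℝ) ≤ -p by linarith) c
      have h' : (1:ℝ) - c * p ≤ (1 - p) ^ c := by
        rw [show (1:ℝ) - p = 1 + -p by ring]
        linarith [h]
      rw [hq]
      linarith
    have hpc0 : (0:ℝ) ≤ p * c := by positivity
    have h1 : q ^ 2 ≤ p ^ 2 * (c:ℝ) ^ 2 := by nlinarith
    have h2 : q * r * s ≤ p * c * s := by
      have hqrq : q * r ≤ p * c := by nlinarith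
      exact mul_le_mul_of_nonneg_right hqrq hs0
    nlinarith
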